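/- Let n ≥ 1 and let Δ = {p ∈ ℝⁿ : pᵢ ≥ 0 for all i and ∑ᵢ pᵢ = 1} be the standard price simplex. If f : Δ → ℝⁿ is a continuous excess demand function satisfying Walras's law, i.e. ⟨p, f(p)⟩ = 0 for every p ∈ Δ, then there exists a price vector p* ∈ Δ such that fᵢ(p*) ≤ 0 for every coordinate i (an equilibrium price exists). This is the existence part of general equilibrium theory for a pure exchange economy, which the paper notes 'can be proved without further assumptions (by using fixed-point theorems)'. -/

import Mathlib

open Finset

namespace GND

/-- integer points of the dilated simplex: nonneg, supported on [0,m], sum k. -/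
def IsPt (m : ℕ) (k : ℤ) (x : ℕ → ℤ) : Prop :=
  (∀ j, 0 ≤ x j) ∧ (∀ j, m < j → x j = 0) ∧ (∑ j ∈ range (m+1), x j) = k

abbrev Cell := (ℕ → ℤ) × (ℕ → ℕ)

def vtx (m : ℕ) (b : ℕ → ℤ) (pos : ℕ → ℕ) (t : ℕ) : ℕ → ℤ := fun j =>
  b j + (if 1 ≤ j ∧ j ≤ m ∧ pos (j-1) < t then 1 else 0)
      - (if j < m ∧ pos j < t then 1 else 0)

def mpos (m : ℕ) (pos : ℕ → ℕ) (t : ℕ) : ℕ → ℕ := fun j =>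
  if m ≤ j then 0 else if pos j = t - 1 then t else if pos j = t then t - 1 else pos j
def zpos (m : ℕ) (pos : ℕ → ℕ) : ℕ → ℕ := fun j =>
  if m ≤ j then 0 else if pos j = 0 then m - 1 else pos j - 1
def epos (m : ℕ) (pos : ℕ → ℕ) : ℕ → ℕ := fun j =>
  if m ≤ j then 0 else if pos j = m - 1 then 0 else pos j + 1
def ebase (b : ℕ → ℤ) (a : ℕ) : ℕ → ℤ := fun j =>
  b j + (if j = a then 1 else 0) - (if j = a+1 then 1 else 0)
def sym (m : ℕ) (pos : ℕ → ℕ) (t : ℕ) : ℕ :=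
  ((List.range m).find? (fun j => pos j = t)).getD 0

def IsPos (m : ℕ) (pos : ℕ → ℕ) : Prop :=
  (∀ j, (j < m → pos j < m) ∧ (m ≤ j → pos j = 0)) ∧
  (∀ t, t < m → ∃ j, j < m ∧ pos j = t) ∧
  (∀ j j', j < m → j' < m → pos j = pos j' → j = j')

def IsCell (m : ℕ) (k : ℤ) (c : Cell) : Prop :=
  IsPos m c.2 ∧ ∀ t, t ≤ m → IsPt m k (vtx m c.1 c.2 t)

def labf (m : ℕ) (lab : (ℕ → ℤ) → ℕ) (c : Cell) (t : ℕ) : ℕ := lab (vtx m c.1 c.2 t)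

def IsFull (m : ℕ) (lab : (ℕ → ℤ) → ℕ) (c : Cell) : Prop :=
  ∀ i, i ≤ m → ∃ t, t ≤ m ∧ labf m lab c t = i

def IsDoor (m : ℕ) (lab : (ℕ → ℤ) → ℕ) (c : Cell) (t : ℕ) : Prop :=
  t ≤ m ∧ ∀ i, i < m → ∃ s, s ≤ m ∧ s ≠ t ∧ labf m lab c s = i

noncomputable def pivot (m : ℕ) (c : Cell) (t : ℕ) : Cell × ℕ :=
  if t = 0 then ((vtx m c.1 c.2 1, zpos m c.2), m)
  else if t = m then ((ebase c.1 (sym m c.2 (m-1)), epos m c.2), 0)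
  else ((c.1, mpos m c.2 t), t)

def Bd (m : ℕ) (c : Cell) (t : ℕ) : Prop := t = m ∧ c.2 (m-1) = m-1 ∧ c.1 m = 0




lemma vtx_zero (m : ℕ) (b : ℕ → ℤ) (pos : ℕ → ℕ) : vtx m b pos 0 = b := by
  funext j; simp [vtx]

lemma sum_vtx (m : ℕ) (b : ℕ → ℤ) (pos : ℕ → ℕ) (t : ℕ) :
    ∑ j ∈ range (m+1), vtx m b pos t j = ∑ j ∈ range (m+1), b j := by
  have h1 : ∑ j ∈ range (m+1), (if 1 ≤ j ∧ j ≤ m ∧ pos (j-1) < t then (1:ℤ) else 0)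
      = ∑ j ∈ range m, (if pos j < t then (1:ℤ) else 0) := by
    rw [Finset.sum_range_succ' (fun j => if 1 ≤ j ∧ j ≤ m ∧ pos (j-1) < t then (1:ℤ) else 0)]
    simp only [Nat.add_sub_cancel]
    have : ∀ j ∈ range m, (if 1 ≤ j+1 ∧ j+1 ≤ m ∧ pos j < t then (1:ℤ) else 0)
        = (if pos j < t then (1:ℤ) else 0) := by
      intro j hj; rw [mem_range] at hj
      by_cases h : pos j < t <;> simp [h, Nat.succ_le_iff, hj]
    rw [Finset.sum_congr rfl this]; simp
  have h2 : ∑ j ∈ range (m+1), (if j < m ∧ pos j < t then (1:ℤ) else 0)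
      = ∑ j ∈ range m, (if pos j < t then (1:ℤ) else 0) := by
    rw [Finset.sum_range_succ]
    have : ∀ j ∈ range m, (if j < m ∧ pos j < t then (1:ℤ) else 0)
        = (if pos j < t then (1:ℤ) else 0) := by
      intro j hj; rw [mem_range] at hj
      by_cases h : pos j < t <;> simp [h, hj]
    rw [Finset.sum_congr rfl this]; simp
  simp only [vtx, Finset.sum_add_distrib, Finset.sum_sub_distrib, h1, h2]
  ring

/-- a point moved by one elementary step `x ↦ x - δ_i + δ_{i+1}` stays a point,
provided coordinate `i` was ≥ 1 and `i < m`. -/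
lemma IsPt.shift {m : ℕ} {k : ℤ} {x : ℕ → ℤ} (h : IsPt m k x) {i : ℕ} (hi : i < m)
    (hx : 1 ≤ x i) :
    IsPt m k (fun j => x j + (if j = i+1 then 1 else 0) - (if j = i then 1 else 0)) := by
  obtain ⟨h0, hs, hk⟩ := h
  refine ⟨?_, ?_, ?_⟩
  · intro j
    by_cases h1 : j = i + 1
    · subst h1; have := h0 (i+1); simp [show i+1 ≠ i by omega]; omega
    · by_cases h2 : j = i
      · subst h2; simp [h1]; omega
      · have := h0 j; simp [h1, h2]; omega
  · intro j hj
    have : j ≠ i := by omega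
    have : j ≠ i + 1 := by omega
    simp [hs j hj, *]
  · rw [Finset.sum_sub_distrib, Finset.sum_add_distrib]
    have e1 : ∑ j ∈ range (m+1), (if j = i+1 then (1:ℤ) else 0) = 1 := by
      rw [Finset.sum_ite_eq' (range (m+1))]; simp [Nat.lt_succ_iff]; omega
    have e2 : ∑ j ∈ range (m+1), (if j = i then (1:ℤ) else 0) = 1 := by
      rw [Finset.sum_ite_eq' (range (m+1))]; simp [Nat.lt_succ_iff]; omega
    rw [e1, e2, hk]; ring


lemma sym_spec {m : ℕ} {pos : ℕ → ℕ} {t : ℕ} (h : ∃ j, j < m ∧ pos j = t) :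
    sym m pos t < m ∧ pos (sym m pos t) = t := by
  obtain ⟨j, hj, hpj⟩ := h
  have hmem : j ∈ List.range m := by simpa using hj
  have : ((List.range m).find? (fun j => pos j = t)).isSome := by
    rw [List.find?_isSome]
    exact ⟨j, hmem, by simpa using hpj⟩
  obtain ⟨a, ha⟩ := Option.isSome_iff_exists.mp this
  have h1 := List.find?_some ha
  have h2 := List.mem_of_find?_eq_some ha
  rw [List.mem_range] at h2
  simp only [decide_eq_true_eq] at h1
  simp [sym, ha, h1, h2]


lemma door_card (m : ℕ) (g : ℕ → ℕ) (hg : ∀ t, t ≤ m → g t ≤ m) :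
    ((((range (m+1)).filter
        (fun t => t ≤ m ∧ ∀ i, i < m → ∃ s, s ≤ m ∧ s ≠ t ∧ g s = i)).card : ZMod 2))
    = if (∀ i, i ≤ m → ∃ t, t ≤ m ∧ g t = i) then 1 else 0 := by
  by_cases hfull : (∀ i, i ≤ m → ∃ t, t ≤ m ∧ g t = i)
  · rw [if_pos hfull]
    have hinj := Finset.inj_on_of_surj_on_of_card_le (s := range (m+1)) (t := range (m+1))
      (fun a _ => g a)
      (by intro a ha; simp only [mem_range] at ha ⊢
          exact Nat.lt_succ_of_le (hg a (Nat.lt_succ_iff.mp ha)))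
      (by intro b hb; rw [mem_range] at hb
          obtain ⟨t, ht, hgt⟩ := hfull b (by omega)
          exact ⟨t, by rw [mem_range]; omega, hgt⟩)
      le_rfl
    obtain ⟨t₀, ht₀, hgt₀⟩ := hfull m le_rfl
    have : (range (m+1)).filter
        (fun t => t ≤ m ∧ ∀ i, i < m → ∃ s, s ≤ m ∧ s ≠ t ∧ g s = i) = {t₀} := by
      ext t
      simp only [mem_filter, mem_range, mem_singleton]
      constructor
      · rintro ⟨-, htm, hdoor⟩
        by_contra hne
        rcases Nat.lt_or_ge (g t) m with hlt | hge
        · obtain ⟨s, hs, hst, hgs⟩ := hdoor (g t) hlt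
          exact hst (hinj (by rw [mem_range]; omega) (by rw [mem_range]; omega) hgs)
        · have : g t = m := le_antisymm (hg t htm) hge
          exact hne (hinj (by rw [mem_range]; omega) (by rw [mem_range]; omega)
            (by rw [this, hgt₀]))
      · rintro rfl
        refine ⟨by omega, ht₀, fun i hi => ?_⟩
        obtain ⟨s, hs, hgs⟩ := hfull i (by omega)
        exact ⟨s, hs, fun h => by subst h; omega, hgs⟩
    rw [this]; simp
  · rw [if_neg hfull]
    by_cases hd : ∃ t₁, t₁ ∈ (range (m+1)).filter
        (fun t => t ≤ m ∧ ∀ i, i < m → ∃ s, s ≤ m ∧ s ≠ t ∧ g s = i)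
    · obtain ⟨t₁, ht₁mem⟩ := hd
      rw [mem_filter, mem_range] at ht₁mem
      obtain ⟨-, ht₁, hdoor₁⟩ := ht₁mem
      have hlt : ∀ s, s ≤ m → g s < m := by
        intro s hs
        by_contra hge
        have hgsm : g s = m := le_antisymm (hg s hs) (by omega)
        apply hfull
        intro i hi
        rcases Nat.lt_or_ge i m with h | h
        · obtain ⟨s', hs', -, hgs'⟩ := hdoor₁ i h
          exact ⟨s', hs', hgs'⟩
        · exact ⟨s, hs, by omega⟩
      have hinj := Finset.inj_on_of_surj_on_of_card_le
        (s := (range (m+1)).erase t₁) (t := range m)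
        (fun a _ => g a)
        (by intro a ha; rw [mem_erase, mem_range] at ha
            simp only [mem_range]; exact hlt a (by omega))
        (by intro b hb; rw [mem_range] at hb
            obtain ⟨s, hs, hst, hgs⟩ := hdoor₁ b hb
            exact ⟨s, by rw [mem_erase, mem_range]; exact ⟨hst, by omega⟩, hgs⟩)
        (by rw [Finset.card_erase_of_mem (by rw [mem_range]; omega), card_range]; simp)
      obtain ⟨s₁, hs₁, hs₁t₁, hgs₁⟩ := hdoor₁ (g t₁) (hlt t₁ ht₁)
      have hset : (range (m+1)).filter
          (fun t => t ≤ m ∧ ∀ i, i < m → ∃ s, s ≤ m ∧ s ≠ t ∧ g s = i) = {t₁, s₁} := by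
        ext t
        simp only [mem_filter, mem_range, mem_insert, mem_singleton]
        constructor
        · rintro ⟨-, htm, hdoor⟩
          by_contra hne
          push_neg at hne
          obtain ⟨hnet₁, hnes₁⟩ := hne
          obtain ⟨s, hs, hst, hgs⟩ := hdoor (g t) (hlt t htm)
          have htmem : t ∈ (range (m+1)).erase t₁ := by
            rw [mem_erase, mem_range]; exact ⟨hnet₁, by omega⟩
          rcases eq_or_ne s t₁ with heq | hsnet₁
          · have : g s₁ = g t := by rw [hgs₁, ← heq, hgs]
            have hs₁mem : s₁ ∈ (range (m+1)).erase t₁ := by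
              rw [mem_erase, mem_range]; exact ⟨hs₁t₁, by omega⟩
            exact hnes₁ (hinj hs₁mem htmem this).symm
          · have hsmem : s ∈ (range (m+1)).erase t₁ := by
              rw [mem_erase, mem_range]; exact ⟨hsnet₁, by omega⟩
            exact hst (hinj hsmem htmem hgs)
        · intro ht
          rcases ht with heq | heq <;> subst heq
          · exact ⟨by omega, ht₁, hdoor₁⟩
          · refine ⟨by omega, hs₁, fun i hi => ?_⟩
            obtain ⟨s, hs, hst, hgs⟩ := hdoor₁ i hi
            rcases eq_or_ne s t with heq2 | hss₁
            · refine ⟨t₁, ht₁, fun h => hs₁t₁ h.symm, ?_⟩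
              rw [← hgs₁]; rw [heq2] at hgs; exact hgs
            · exact ⟨s, hs, hss₁, hgs⟩
      rw [hset, Finset.card_insert_of_notMem (by simp [Ne.symm hs₁t₁]), Finset.card_singleton]
      decide
    · push_neg at hd
      have : (range (m+1)).filter
          (fun t => t ≤ m ∧ ∀ i, i < m → ∃ s, s ≤ m ∧ s ≠ t ∧ g s = i) = ∅ :=
        Finset.eq_empty_of_forall_notMem hd
      rw [this]; simp



lemma mid_vtx_eq (m : ℕ) (b : ℕ → ℤ) (pos : ℕ → ℕ) (t : ℕ)
    (hb : ∀ j, j < m → pos j < m) (ht : 0 < t) (htm : t < m)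
    (s : ℕ) (hst : s ≠ t) :
    vtx m b (mpos m pos t) s = vtx m b pos s := by
  funext j
  have A : (if 1 ≤ j ∧ j ≤ m ∧ mpos m pos t (j-1) < s then (1:ℤ) else 0)
      = (if 1 ≤ j ∧ j ≤ m ∧ pos (j-1) < s then 1 else 0) := by
    have h1 := hb (j-1); simp only [mpos]; split_ifs <;> omega
  have B : (if j < m ∧ mpos m pos t j < s then (1:ℤ) else 0)
      = (if j < m ∧ pos j < s then 1 else 0) := by
    have h2 := hb j; simp only [mpos]; split_ifs <;> omega
  simp only [vtx]; rw [A, B]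

lemma mid_vtx_new (m : ℕ) (b : ℕ → ℤ) (pos : ℕ → ℕ) (t : ℕ)
    (hb : ∀ j, j < m → pos j < m)
    (hinj : ∀ j j', j < m → j' < m → pos j = pos j' → j = j')
    (ht : 0 < t) (htm : t < m)
    {a cc : ℕ} (haa : a < m) (hpa : pos a = t - 1) (hcc : cc < m) (hpc : pos cc = t) :
    vtx m b (mpos m pos t) t = fun j =>
      vtx m b pos (t-1) j + (if j = cc+1 then 1 else 0) - (if j = cc then 1 else 0) := by
  funext j
  have A : (if 1 ≤ j ∧ j ≤ m ∧ mpos m pos t (j-1) < t then (1:ℤ) else 0)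
      = (if 1 ≤ j ∧ j ≤ m ∧ pos (j-1) < t-1 then 1 else 0) + (if j = cc + 1 then 1 else 0) := by
    have h1 := hb (j-1)
    have i1 : j - 1 < m → pos (j-1) = pos cc → j - 1 = cc := fun u v => hinj _ _ u hcc v
    have i3 : j - 1 < m → pos (j-1) = pos a → j - 1 = a := fun u v => hinj _ _ u haa v
    have c1 : j - 1 = cc → pos (j-1) = pos cc := fun h => by rw [h]
    simp only [mpos]; split_ifs <;> omega
  have B : (if j < m ∧ mpos m pos t j < t then (1:ℤ) else 0)
      = (if j < m ∧ pos j < t-1 then 1 else 0) + (if j = cc then 1 else 0) := by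
    have h2 := hb j
    have i2 : j < m → pos j = pos cc → j = cc := fun u v => hinj _ _ u hcc v
    have i4 : j < m → pos j = pos a → j = a := fun u v => hinj _ _ u haa v
    have c2 : j = cc → pos j = pos cc := fun h => by rw [h]
    simp only [mpos]; split_ifs <;> omega
  simp only [vtx]; rw [A, B]; ring

lemma mid_isPos (m : ℕ) (pos : ℕ → ℕ) (t : ℕ)
    (hP : (∀ j, (j < m → pos j < m) ∧ (m ≤ j → pos j = 0)) ∧
      (∀ u, u < m → ∃ j, j < m ∧ pos j = u) ∧
      (∀ j j', j < m → j' < m → pos j = pos j' → j = j'))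
    (ht : 0 < t) (htm : t < m) :
    (∀ j, (j < m → mpos m pos t j < m) ∧ (m ≤ j → mpos m pos t j = 0)) ∧
      (∀ u, u < m → ∃ j, j < m ∧ mpos m pos t j = u) ∧
      (∀ j j', j < m → j' < m → mpos m pos t j = mpos m pos t j' → j = j') := by
  obtain ⟨hb, hsurj, hinj⟩ := hP
  refine ⟨?_, ?_, ?_⟩
  · intro j; have := (hb j).1; constructor <;> intro h <;> simp only [mpos] <;>
      split_ifs <;> omega
  · intro u hu
    rcases eq_or_ne u (t-1) with heq | hu1
    · obtain ⟨j, hj, hpj⟩ := hsurj t htm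
      exact ⟨j, hj, by simp only [mpos]; split_ifs <;> omega⟩
    · rcases eq_or_ne u t with heq | hu2
      · obtain ⟨j, hj, hpj⟩ := hsurj (t-1) (by omega)
        exact ⟨j, hj, by simp only [mpos]; split_ifs <;> omega⟩
      · obtain ⟨j, hj, hpj⟩ := hsurj u hu
        exact ⟨j, hj, by simp only [mpos]; split_ifs <;> omega⟩
  · intro j j' hj hj' h
    have i := hinj j j' hj hj'
    simp only [mpos] at h; split_ifs at h <;> omega





section zero
variable (m : ℕ) (b : ℕ → ℤ) (pos : ℕ → ℕ)

lemma zero_vtx_eq (hb : ∀ j, j < m → pos j < m) (hm : 1 ≤ m)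
    (s : ℕ) (hs : s < m) :
    vtx m (vtx m b pos 1) (zpos m pos) s = vtx m b pos (s+1) := by
  funext j
  have A : (if 1 ≤ j ∧ j ≤ m ∧ zpos m pos (j-1) < s then (1:ℤ) else 0)
      = (if 1 ≤ j ∧ j ≤ m ∧ pos (j-1) < s+1 then 1 else 0)
        - (if 1 ≤ j ∧ j ≤ m ∧ pos (j-1) < 1 then 1 else 0) := by
    have h1 := hb (j-1); simp only [zpos]; split_ifs <;> omega
  have B : (if j < m ∧ zpos m pos j < s then (1:ℤ) else 0)
      = (if j < m ∧ pos j < s+1 then 1 else 0) - (if j < m ∧ pos j < 1 then 1 else 0) := by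
    have h2 := hb j; simp only [zpos]; split_ifs <;> omega
  simp only [vtx]; rw [A, B]; ring

lemma zero_vtx_new (hb : ∀ j, j < m → pos j < m)
    (hinj : ∀ j j', j < m → j' < m → pos j = pos j' → j = j') (hm : 1 ≤ m)
    {c₁ : ℕ} (hc₁ : c₁ < m) (hpc₁ : pos c₁ = 0) :
    vtx m (vtx m b pos 1) (zpos m pos) m = fun j =>
      vtx m b pos m j + (if j = c₁+1 then 1 else 0) - (if j = c₁ then 1 else 0) := by
  funext j
  have A : (if 1 ≤ j ∧ j ≤ m ∧ zpos m pos (j-1) < m then (1:ℤ) else 0)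
      = (if 1 ≤ j ∧ j ≤ m ∧ pos (j-1) < m then 1 else 0) := by
    have h1 := hb (j-1); simp only [zpos]; split_ifs <;> omega
  have B : (if j < m ∧ zpos m pos j < m then (1:ℤ) else 0)
      = (if j < m ∧ pos j < m then 1 else 0) := by
    have h2 := hb j; simp only [zpos]; split_ifs <;> omega
  have C : (if 1 ≤ j ∧ j ≤ m ∧ pos (j-1) < 1 then (1:ℤ) else 0)
      = (if j = c₁+1 then 1 else 0) := by
    have h1 := hb (j-1)
    have i1 : j - 1 < m → pos (j-1) = pos c₁ → j - 1 = c₁ := fun u v => hinj _ _ u hc₁ v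
    have c1 : j - 1 = c₁ → pos (j-1) = pos c₁ := fun h => by rw [h]
    split_ifs <;> omega
  have D : (if j < m ∧ pos j < 1 then (1:ℤ) else 0) = (if j = c₁ then 1 else 0) := by
    have i2 : j < m → pos j = pos c₁ → j = c₁ := fun u v => hinj _ _ u hc₁ v
    have c2 : j = c₁ → pos j = pos c₁ := fun h => by rw [h]
    split_ifs <;> omega
  simp only [vtx]; rw [A, B, C, D]; ring

lemma zero_mono (hb : ∀ j, j < m → pos j < m)
    {c₁ : ℕ} (hc₁ : c₁ < m) (hpc₁ : pos c₁ = 0)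
    (s : ℕ) (hs1 : 1 ≤ s) (hsm : s ≤ m) :
    vtx m b pos s c₁ ≤ vtx m b pos m c₁ := by
  have h1 := hb (c₁ - 1)
  simp only [vtx]; split_ifs <;> omega

lemma zero_isPos (hb : ∀ j, (j < m → pos j < m) ∧ (m ≤ j → pos j = 0))
    (hsurj : ∀ u, u < m → ∃ j, j < m ∧ pos j = u)
    (hinj : ∀ j j', j < m → j' < m → pos j = pos j' → j = j') (hm : 1 ≤ m) :
    (∀ j, (j < m → zpos m pos j < m) ∧ (m ≤ j → zpos m pos j = 0)) ∧
      (∀ u, u < m → ∃ j, j < m ∧ zpos m pos j = u) ∧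
      (∀ j j', j < m → j' < m → zpos m pos j = zpos m pos j' → j = j') := by
  refine ⟨?_, ?_, ?_⟩
  · intro j; have := (hb j).1; constructor <;> intro h <;> simp only [zpos] <;>
      split_ifs <;> omega
  · intro u hu
    rcases eq_or_ne u (m-1) with heq | hne
    · obtain ⟨j, hj, hpj⟩ := hsurj 0 (by omega)
      exact ⟨j, hj, by simp only [zpos]; split_ifs <;> omega⟩
    · obtain ⟨j, hj, hpj⟩ := hsurj (u+1) (by omega)
      exact ⟨j, hj, by simp only [zpos]; split_ifs <;> omega⟩
  · intro j j' hj hj' h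
    have i := hinj j j' hj hj'
    have b1 := (hb j).1; have b2 := (hb j').1
    simp only [zpos] at h; split_ifs at h <;> omega

end zero

section em
variable (m : ℕ) (b : ℕ → ℤ) (pos : ℕ → ℕ)

lemma em_vtx_eq (hb : ∀ j, j < m → pos j < m)
    (hinj : ∀ j j', j < m → j' < m → pos j = pos j' → j = j') (hm : 1 ≤ m)
    {a : ℕ} (haa : a < m) (hpa : pos a = m - 1)
    (s : ℕ) (hs1 : 1 ≤ s) (hsm : s ≤ m) :
    vtx m (ebase b a) (epos m pos) s = vtx m b pos (s-1) := by
  funext j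
  have A : (if 1 ≤ j ∧ j ≤ m ∧ epos m pos (j-1) < s then (1:ℤ) else 0)
      = (if 1 ≤ j ∧ j ≤ m ∧ pos (j-1) < s-1 then 1 else 0) + (if j = a+1 then 1 else 0) := by
    have h1 := hb (j-1)
    have i1 : j - 1 < m → pos (j-1) = pos a → j - 1 = a := fun u v => hinj _ _ u haa v
    have c1 : j - 1 = a → pos (j-1) = pos a := fun h => by rw [h]
    simp only [epos]; split_ifs <;> omega
  have B : (if j < m ∧ epos m pos j < s then (1:ℤ) else 0)
      = (if j < m ∧ pos j < s-1 then 1 else 0) + (if j = a then 1 else 0) := by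
    have h2 := hb j
    have i2 : j < m → pos j = pos a → j = a := fun u v => hinj _ _ u haa v
    have c2 : j = a → pos j = pos a := fun h => by rw [h]
    simp only [epos]; split_ifs <;> omega
  simp only [vtx, ebase]; rw [A, B]; ring

lemma em_base_pos (hb : ∀ j, j < m → pos j < m)
    (hinj : ∀ j j', j < m → j' < m → pos j = pos j' → j = j') (hm : 1 ≤ m)
    (hC : ∀ s, s ≤ m → ∀ j, 0 ≤ vtx m b pos s j)
    {a : ℕ} (haa : a < m) (hpa : pos a = m - 1)
    (hint : ¬ (pos (m-1) = m-1 ∧ b m = 0)) :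
    1 ≤ b (a+1) := by
  rcases Nat.lt_or_ge (a+1) m with hlt | hge
  · by_contra hcon
    have hr := hb (a+1)
    have hi : pos (a+1) = pos a → a+1 = a := fun v => hinj _ _ hlt haa v
    have hnn := hC (pos (a+1) + 1) (by omega) (a+1)
    have hb0 := hC 0 (by omega) (a+1)
    have ca : pos (a+1-1) = pos a := by norm_num
    simp only [vtx] at hnn hb0
    split_ifs at hnn hb0 <;> omega
  · have ha1 : a = m - 1 := by omega
    have : pos (m-1) = m-1 := by rw [← ha1] at *; omega
    have hbm : b m ≠ 0 := fun h => hint ⟨this, h⟩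
    have hb0 := hC 0 (by omega) m
    have cb : b (a+1) = b m := by rw [show a+1 = m by omega]
    simp only [vtx] at hb0
    split_ifs at hb0 <;> omega

lemma em_isPos (hb : ∀ j, (j < m → pos j < m) ∧ (m ≤ j → pos j = 0))
    (hsurj : ∀ u, u < m → ∃ j, j < m ∧ pos j = u)
    (hinj : ∀ j j', j < m → j' < m → pos j = pos j' → j = j') (hm : 1 ≤ m) :
    (∀ j, (j < m → epos m pos j < m) ∧ (m ≤ j → epos m pos j = 0)) ∧
      (∀ u, u < m → ∃ j, j < m ∧ epos m pos j = u) ∧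
      (∀ j j', j < m → j' < m → epos m pos j = epos m pos j' → j = j') := by
  refine ⟨?_, ?_, ?_⟩
  · intro j; have := (hb j).1; constructor <;> intro h <;> simp only [epos] <;>
      split_ifs <;> omega
  · intro u hu
    rcases eq_or_ne u 0 with heq | hne
    · obtain ⟨j, hj, hpj⟩ := hsurj (m-1) (by omega)
      exact ⟨j, hj, by simp only [epos]; split_ifs <;> omega⟩
    · obtain ⟨j, hj, hpj⟩ := hsurj (u-1) (by omega)
      exact ⟨j, hj, by simp only [epos]; split_ifs <;> omega⟩
  · intro j j' hj hj' h
    have i := hinj j j' hj hj'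
    have b1 := (hb j).1; have b2 := (hb j').1
    simp only [epos] at h; split_ifs at h <;> omega

end em






lemma sym_eq {m : ℕ} {pos : ℕ → ℕ} {t x : ℕ}
    (hinj : ∀ j j', j < m → j' < m → pos j = pos j' → j = j')
    (hx : x < m) (hv : pos x = t) : sym m pos t = x := by
  have h := sym_spec ⟨x, hx, hv⟩
  exact hinj _ _ h.1 hx (by rw [h.2, hv])

lemma mid_mono (m : ℕ) (b : ℕ → ℤ) (pos : ℕ → ℕ) (t : ℕ)
    {cc : ℕ} (hcc : cc < m) (hpc : pos cc = t)
    (s : ℕ) (hst : s ≠ t) :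
    vtx m b pos s cc ≤ vtx m b pos (t-1) cc := by
  simp only [vtx]; split_ifs <;> omega

lemma inv_mid (m : ℕ) (pos : ℕ → ℕ) (t : ℕ)
    (hb : ∀ j, (j < m → pos j < m) ∧ (m ≤ j → pos j = 0)) (ht : 0 < t) (htm : t < m) :
    mpos m (mpos m pos t) t = pos := by
  funext j
  have := (hb j).1; have h2 := (hb j).2
  simp only [mpos]; split_ifs <;> omega

lemma inv_z_e (m : ℕ) (pos : ℕ → ℕ)
    (hb : ∀ j, (j < m → pos j < m) ∧ (m ≤ j → pos j = 0)) (hm : 1 ≤ m) :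
    epos m (zpos m pos) = pos := by
  funext j
  have := (hb j).1; have h2 := (hb j).2
  simp only [epos, zpos]; split_ifs <;> first | omega | exact (‹False›).elim

lemma inv_e_z (m : ℕ) (pos : ℕ → ℕ)
    (hb : ∀ j, (j < m → pos j < m) ∧ (m ≤ j → pos j = 0)) (hm : 1 ≤ m) :
    zpos m (epos m pos) = pos := by
  funext j
  have := (hb j).1; have h2 := (hb j).2
  simp only [epos, zpos]; split_ifs <;> first | omega | exact (‹False›).elim

lemma ebase_vtx_one (m : ℕ) (b : ℕ → ℤ) (pos : ℕ → ℕ)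
    (hb : ∀ j, j < m → pos j < m)
    (hinj : ∀ j j', j < m → j' < m → pos j = pos j' → j = j') (hm : 1 ≤ m)
    {c₁ : ℕ} (hc₁ : c₁ < m) (hpc₁ : pos c₁ = 0) :
    ebase (vtx m b pos 1) c₁ = b := by
  funext j
  have h1 := hb (j-1)
  have i1 : j - 1 < m → pos (j-1) = pos c₁ → j - 1 = c₁ := fun u v => hinj _ _ u hc₁ v
  have i2 : j < m → pos j = pos c₁ → j = c₁ := fun u v => hinj _ _ u hc₁ v
  have c1 : j - 1 = c₁ → pos (j-1) = pos c₁ := fun h => by rw [h]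
  have c2 : j = c₁ → pos j = pos c₁ := fun h => by rw [h]
  simp only [ebase, vtx]; split_ifs <;> omega

/-- reverse elementary shift. -/
lemma IsPt_shift' {m : ℕ} {k : ℤ} {x : ℕ → ℤ}
    (h : (∀ j, 0 ≤ x j) ∧ (∀ j, m < j → x j = 0) ∧ (∑ j ∈ range (m+1), x j) = k)
    {i : ℕ} (hi : i < m) (hx : 1 ≤ x (i+1)) :
    (∀ j, 0 ≤ ebase x i j) ∧ (∀ j, m < j → ebase x i j = 0) ∧
      (∑ j ∈ range (m+1), ebase x i j) = k := by
  obtain ⟨h0, hs, hk⟩ := h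
  refine ⟨?_, ?_, ?_⟩
  · intro j
    have hj := h0 j; have hji := h0 i
    by_cases h1 : j = i <;> by_cases h2 : j = i+1 <;>
      simp [ebase, h1, h2] at hj ⊢ <;> omega
  · intro j hj
    have n1 : j ≠ i := by omega
    have n2 : j ≠ i + 1 := by omega
    simp [ebase, hs j hj, n1, n2]
  · simp only [ebase]
    rw [Finset.sum_sub_distrib, Finset.sum_add_distrib]
    have e1 : ∑ j ∈ range (m+1), (if j = i then (1:ℤ) else 0) = 1 := by
      rw [Finset.sum_ite_eq' (range (m+1))]; simp [Nat.lt_succ_iff]; omega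
    have e2 : ∑ j ∈ range (m+1), (if j = i+1 then (1:ℤ) else 0) = 1 := by
      rw [Finset.sum_ite_eq' (range (m+1))]; simp [Nat.lt_succ_iff]; omega
    rw [e1, e2, hk]; ring


lemma Bd_invalid (m : ℕ) (k : ℤ) (hm : 1 ≤ m) (c : Cell) (t : ℕ)
    (hc : IsCell m k c) (hbd : Bd m c t) : ¬ IsCell m k (pivot m c t).1 := by
  obtain ⟨ht, hp, hb0⟩ := hbd
  rw [ht]
  have hsym : sym m c.2 (m-1) = m-1 := sym_eq hc.1.2.2 (by omega) hp
  simp only [pivot, if_neg (by omega : ¬ m = 0), if_pos rfl, ite_true, hsym]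
  intro hcell
  have hnn := (hcell.2 0 (by omega)).1 m
  rw [vtx_zero] at hnn
  simp only [ebase] at hnn
  split_ifs at hnn <;> omega

theorem pivot_good (m : ℕ) (k : ℤ) (lab : (ℕ → ℤ) → ℕ) (hm : 1 ≤ m)
    (hlab : ∀ x, IsPt m k x → lab x ≤ m ∧ 1 ≤ x (lab x))
    (b : ℕ → ℤ) (pos : ℕ → ℕ) (t : ℕ)
    (hc : IsCell m k (b, pos)) (hd : IsDoor m lab (b, pos) t) (hbd : ¬ Bd m (b, pos) t) :
    IsCell m k (pivot m (b,pos) t).1 ∧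
    IsDoor m lab (pivot m (b,pos) t).1 (pivot m (b,pos) t).2 ∧
    ¬ Bd m (pivot m (b,pos) t).1 (pivot m (b,pos) t).2 ∧
    pivot m (pivot m (b,pos) t).1 (pivot m (b,pos) t).2 = ((b,pos), t) ∧
    pivot m (b,pos) t ≠ ((b,pos), t) := by
  have hcell0 : IsCell m k (b, pos) := hc
  obtain ⟨⟨hbnd, hsurj, hinj⟩, hC⟩ := hc
  obtain ⟨htm, hdoor⟩ := hd
  have hb1 : ∀ j, j < m → pos j < m := fun j h => (hbnd j).1 h
  have hC' : ∀ s, s ≤ m → IsPt m k (vtx m b pos s) := hC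
  have coord : ∀ i s, s ≤ m → labf m lab (b,pos) s = i → 1 ≤ vtx m b pos s i := by
    intro i s hs hl
    have h2 := (hlab _ (hC' s hs)).2
    rwa [show lab (vtx m b pos s) = i from hl] at h2
  by_cases ht0 : t = 0
  · subst ht0
    obtain ⟨hc₁m, hpc₁⟩ := sym_spec (hsurj 0 (by omega))
    set c₁ := sym m pos 0 with hc₁def
    have hpc₁' : pos c₁ = 0 := hpc₁
    have hpv : pivot m (b,pos) 0 = ((vtx m b pos 1, zpos m pos), m) := by
      simp [pivot]
    rw [hpv]
    obtain ⟨zb, zs, zi⟩ := zero_isPos m pos hbnd hsurj hinj hm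
    have hcell' : IsCell m k (vtx m b pos 1, zpos m pos) := by
      refine ⟨⟨zb, zs, zi⟩, fun s hs => ?_⟩
      show IsPt m k (vtx m (vtx m b pos 1) (zpos m pos) s)
      rcases Nat.lt_or_ge s m with hsm | hsm
      · rw [zero_vtx_eq m b pos hb1 hm s hsm]
        exact hC' (s+1) (by omega)
      · have hseq : s = m := by omega
        rw [hseq]
        rw [zero_vtx_new m b pos hb1 hinj hm hc₁m hpc₁']
        obtain ⟨s₀, hs₀, hs₀ne, hls₀⟩ := hdoor c₁ hc₁m
        have h1 := coord c₁ s₀ hs₀ hls₀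
        have h2 := zero_mono m b pos hb1 hc₁m hpc₁' s₀ (by omega) hs₀
        exact IsPt.shift (hC' m le_rfl) hc₁m (by omega)
    have hinv : pivot m (vtx m b pos 1, zpos m pos) m = ((b, pos), 0) := by
      have hzc₁ : zpos m pos c₁ = m - 1 := by
        simp only [zpos]; split_ifs <;> omega
      have hsym : sym m (zpos m pos) (m-1) = c₁ := sym_eq zi hc₁m hzc₁
      simp only [pivot, if_neg (by omega : ¬ m = 0), if_pos rfl, ite_true]
      show ((ebase (vtx m b pos 1) (sym m (zpos m pos) (m-1)), epos m (zpos m pos)), 0)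
          = ((b, pos), 0)
      rw [hsym, ebase_vtx_one m b pos hb1 hinj hm hc₁m hpc₁', inv_z_e m pos hbnd hm]
    refine ⟨hcell', ?_, ?_, hinv, ?_⟩
    · refine ⟨le_rfl, fun i hi => ?_⟩
      obtain ⟨s, hs, hsne, hls⟩ := hdoor i hi
      refine ⟨s-1, by omega, by omega, ?_⟩
      show lab (vtx m (vtx m b pos 1) (zpos m pos) (s-1)) = i
      rw [zero_vtx_eq m b pos hb1 hm (s-1) (by omega), show s-1+1 = s from by omega]
      exact hls
    · intro hBd
      have hni := Bd_invalid m k hm _ m hcell' hBd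
      rw [hinv] at hni
      exact hni hcell0
    · intro h
      have := congrArg Prod.snd h
      simp at this; omega
  · by_cases htm' : t = m
    · rw [htm'] at hdoor hbd ⊢
      obtain ⟨ham, hpa⟩ := sym_spec (hsurj (m-1) (by omega))
      set a := sym m pos (m-1) with hadef
      have hpa' : pos a = m - 1 := hpa
      have hint : ¬ (pos (m-1) = m-1 ∧ b m = 0) := fun h => hbd ⟨rfl, h.1, h.2⟩
      have hpv : pivot m (b,pos) m = ((ebase b a, epos m pos), 0) := by
        simp only [pivot, if_neg (by omega : ¬ m = 0), if_pos rfl, ite_true]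
        rfl
      rw [hpv]
      obtain ⟨eb, es, ei⟩ := em_isPos m pos hbnd hsurj hinj hm
      have hbpt : IsPt m k b := by
        have := hC' 0 (by omega); rwa [vtx_zero] at this
      have hba1 : 1 ≤ b (a+1) :=
        em_base_pos m b pos hb1 hinj hm (fun s hs j => (hC' s hs).1 j) ham hpa' hint
      have hcell' : IsCell m k (ebase b a, epos m pos) := by
        refine ⟨⟨eb, es, ei⟩, fun s hs => ?_⟩
        show IsPt m k (vtx m (ebase b a) (epos m pos) s)
        rcases Nat.eq_zero_or_pos s with rfl | hs1
        · rw [vtx_zero]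
          exact IsPt_shift' hbpt ham hba1
        · rw [em_vtx_eq m b pos hb1 hinj hm ham hpa' s hs1 hs]
          exact hC' (s-1) (by omega)
      have hinv : pivot m (ebase b a, epos m pos) 0 = ((b, pos), m) := by
        simp only [pivot, if_pos rfl]
        show ((vtx m (ebase b a) (epos m pos) 1, zpos m (epos m pos)), m) = ((b, pos), m)
        rw [em_vtx_eq m b pos hb1 hinj hm ham hpa' 1 le_rfl (by omega),
            show (1:ℕ)-1 = 0 from rfl, vtx_zero, inv_e_z m pos hbnd hm]
      refine ⟨hcell', ?_, ?_, hinv, ?_⟩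
      · refine ⟨by omega, fun i hi => ?_⟩
        obtain ⟨s, hs, hsne, hls⟩ := hdoor i hi
        refine ⟨s+1, by omega, by omega, ?_⟩
        show lab (vtx m (ebase b a) (epos m pos) (s+1)) = i
        rw [em_vtx_eq m b pos hb1 hinj hm ham hpa' (s+1) (by omega) (by omega),
            show s+1-1 = s from by omega]
        exact hls
      · intro hBd
        exact absurd hBd.1 (by omega)
      · intro h
        have := congrArg Prod.snd h
        simp at this; omega
    · have ht1 : 0 < t := by omega
      have htltm : t < m := by omega
      obtain ⟨ham, hpa⟩ := sym_spec (hsurj (t-1) (by omega))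
      obtain ⟨hccm, hpcc⟩ := sym_spec (hsurj t htltm)
      set a := sym m pos (t-1) with hadef
      set cc := sym m pos t with hccdef
      have hpa' : pos a = t - 1 := hpa
      have hpcc' : pos cc = t := hpcc
      have hpv : pivot m (b,pos) t = ((b, mpos m pos t), t) := by
        simp only [pivot, if_neg ht0, if_neg htm']
      rw [hpv]
      have hcell' : IsCell m k (b, mpos m pos t) := by
        refine ⟨mid_isPos m pos t ⟨hbnd, hsurj, hinj⟩ ht1 htltm, fun s hs => ?_⟩
        show IsPt m k (vtx m b (mpos m pos t) s)
        rcases eq_or_ne s t with rfl | hsne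
        · rw [mid_vtx_new m b pos s hb1 hinj ht1 htltm ham hpa' hccm hpcc']
          obtain ⟨s₀, hs₀, hs₀ne, hls₀⟩ := hdoor cc hccm
          have h1 := coord cc s₀ hs₀ hls₀
          have h2 := mid_mono m b pos s hccm hpcc' s₀ hs₀ne
          exact IsPt.shift (hC' (s-1) (by omega)) hccm (by omega)
        · rw [mid_vtx_eq m b pos t hb1 ht1 htltm s hsne]
          exact hC' s hs
      have hinv : pivot m (b, mpos m pos t) t = ((b, pos), t) := by
        simp only [pivot, if_neg ht0, if_neg htm']
        show ((b, mpos m (mpos m pos t) t), t) = ((b, pos), t)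
        rw [inv_mid m pos t hbnd ht1 htltm]
      refine ⟨hcell', ?_, ?_, hinv, ?_⟩
      · refine ⟨by omega, fun i hi => ?_⟩
        obtain ⟨s, hs, hsne, hls⟩ := hdoor i hi
        refine ⟨s, hs, hsne, ?_⟩
        show lab (vtx m b (mpos m pos t) s) = i
        rw [mid_vtx_eq m b pos t hb1 ht1 htltm s hsne]
        exact hls
      · intro hBd
        exact absurd hBd.1 (by omega)
      · intro h
        have h2 := congrArg (fun p => p.1.2 a) h
        simp only [mpos] at h2
        split_ifs at h2 <;> omega

lemma IsPt_le {m : ℕ} {k : ℤ} {x : ℕ → ℤ} (h : IsPt m k x) : ∀ j, x j ≤ k := by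
  obtain ⟨h0, hs, hk⟩ := h
  intro j
  rcases Nat.lt_or_ge m j with hj | hj
  · rw [hs j hj]
    calc (0:ℤ) ≤ ∑ i ∈ range (m+1), x i := Finset.sum_nonneg (fun i _ => h0 i)
    _ = k := hk
  · calc x j ≤ ∑ i ∈ range (m+1), x i :=
        Finset.single_le_sum (fun i _ => h0 i) (by rw [mem_range]; omega)
    _ = k := hk

lemma cells_finite (m : ℕ) (k : ℤ) : {c : Cell | IsCell m k c}.Finite := by
  classical
  set Φ : Cell → ((Fin (m+1) → ℤ) × (Fin (m+1) → ℕ)) :=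
    fun c => ((fun i => c.1 i), (fun i => c.2 i)) with hΦ
  apply Set.Finite.of_finite_image (f := Φ)
  · apply Set.Finite.subset
      (Set.Finite.prod
        (Set.Finite.pi (fun _ : Fin (m+1) => Set.finite_Icc (0:ℤ) k))
        (Set.Finite.pi (fun _ : Fin (m+1) => Set.finite_Iic m)))
    rintro ⟨u, v⟩ ⟨c, hc, hceq⟩
    obtain ⟨⟨hbnd, _, _⟩, hC⟩ := hc
    have hbpt : IsPt m k c.1 := by
      have := hC 0 (by omega); rwa [vtx_zero] at this
    rw [Prod.ext_iff] at hceq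
    obtain ⟨h1, h2⟩ := hceq
    constructor
    · intro i _
      rw [← h1]
      exact ⟨hbpt.1 i, IsPt_le hbpt i⟩
    · intro i _
      rw [← h2]
      simp only [Set.mem_Iic, hΦ]
      rcases Nat.lt_or_ge (i : ℕ) m with hi | hi
      · have := (hbnd i).1 hi; omega
      · have := (hbnd i).2 hi; omega
  · rintro c hc c' hc' heq
    simp only [Set.mem_setOf_eq] at hc hc'
    have hbpt : IsPt m k c.1 := by
      have := hc.2 0 (by omega); rwa [vtx_zero] at this
    have hbpt' : IsPt m k c'.1 := by
      have := hc'.2 0 (by omega); rwa [vtx_zero] at this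
    rw [Prod.ext_iff] at heq ⊢
    simp only [hΦ] at heq
    obtain ⟨h1, h2⟩ := heq
    constructor
    · funext j
      rcases Nat.lt_or_ge j (m+1) with hj | hj
      · exact congrFun h1 ⟨j, hj⟩
      · rw [hbpt.2.1 j (by omega), hbpt'.2.1 j (by omega)]
    · funext j
      rcases Nat.lt_or_ge j (m+1) with hj | hj
      · exact congrFun h2 ⟨j, hj⟩
      · rw [(hc.1.1 j).2 (by omega), (hc'.1.1 j).2 (by omega)]

noncomputable def cells (m : ℕ) (k : ℤ) : Finset Cell := (cells_finite m k).toFinset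

lemma mem_cells {m : ℕ} {k : ℤ} {c : Cell} : c ∈ cells m k ↔ IsCell m k c :=
  Set.Finite.mem_toFinset _

/-- truncation of a position function to dimension `m`. -/
def tpos (m : ℕ) (pos : ℕ → ℕ) : ℕ → ℕ := fun j => if m ≤ j then 0 else pos j

/-- extension of a position function from dimension `m` to `m+1`,
placing symbol `m` at position `m`. -/
def xpos (m : ℕ) (pos : ℕ → ℕ) : ℕ → ℕ := fun j =>
  if m+1 ≤ j then 0 else if j = m then m else pos j

lemma vtx_dim_eq (m : ℕ) (b : ℕ → ℤ) (pos pos' : ℕ → ℕ)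
    (hagree : ∀ j, j < m → pos j = pos' j) (hmm : pos m = m)
    (s : ℕ) (hs : s ≤ m) :
    vtx (m+1) b pos s = vtx m b pos' s := by
  funext j
  have ca : j - 1 < m → pos (j-1) = pos' (j-1) := fun h => hagree _ h
  have cb : j < m → pos j = pos' j := fun h => hagree _ h
  have cm : j - 1 = m → pos (j-1) = pos m := fun h => by rw [h]
  have cm2 : j = m → pos j = pos m := fun h => by rw [h]
  have A : (if 1 ≤ j ∧ j ≤ m+1 ∧ pos (j-1) < s then (1:ℤ) else 0)
      = (if 1 ≤ j ∧ j ≤ m ∧ pos' (j-1) < s then 1 else 0) := by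
    split_ifs <;> omega
  have B : (if j < m+1 ∧ pos j < s then (1:ℤ) else 0)
      = (if j < m ∧ pos' j < s then 1 else 0) := by
    split_ifs <;> omega
  simp only [vtx]; rw [A, B]

lemma vtx_face (m : ℕ) (b : ℕ → ℤ) (pos : ℕ → ℕ)
    (hmm : pos m = m) (hb : b (m+1) = 0) (s : ℕ) (hs : s ≤ m) :
    vtx (m+1) b pos s (m+1) = 0 := by
  have cm : pos (m+1-1) = pos m := by norm_num
  simp only [vtx]; split_ifs <;> omega

lemma IsPt_up {m : ℕ} {k : ℤ} {x : ℕ → ℤ} (h : IsPt m k x) : IsPt (m+1) k x := by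
  obtain ⟨h0, hs, hk⟩ := h
  exact ⟨h0, fun j hj => hs j (by omega), by
    rw [Finset.sum_range_succ, hs (m+1) (by omega), hk]; ring⟩

lemma IsPt_down {m : ℕ} {k : ℤ} {x : ℕ → ℤ} (h : IsPt (m+1) k x) (hx : x (m+1) = 0) :
    IsPt m k x := by
  obtain ⟨h0, hs, hk⟩ := h
  refine ⟨h0, fun j hj => ?_, ?_⟩
  · rcases Nat.lt_or_ge (m+1) j with hj' | hj'
    · exact hs j hj'
    · have : j = m+1 := by omega
      rw [this]; exact hx
  · rw [Finset.sum_range_succ, hx] at hk; omega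

lemma tpos_isPos (m : ℕ) (pos : ℕ → ℕ) (hP : IsPos (m+1) pos) (hmm : pos m = m) :
    IsPos m (tpos m pos) := by
  obtain ⟨hbnd, hsurj, hinj⟩ := hP
  refine ⟨?_, ?_, ?_⟩
  · intro j
    constructor
    · intro hj
      have h1 := (hbnd j).1 (by omega)
      have h2 : pos j = pos m → j = m := fun h => hinj j m (by omega) (by omega) h
      simp only [tpos]; split_ifs <;> omega
    · intro hj; simp only [tpos]; split_ifs <;> omega
  · intro u hu
    obtain ⟨j, hj, hpj⟩ := hsurj u (by omega)
    have : j ≠ m := fun h => by rw [h, hmm] at hpj; omega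
    exact ⟨j, by omega, by simp only [tpos]; split_ifs <;> omega⟩
  · intro j j' hj hj' h
    simp only [tpos] at h
    split_ifs at h <;> first | omega | (exact hinj j j' (by omega) (by omega) h)

lemma xpos_isPos (m : ℕ) (pos : ℕ → ℕ) (hP : IsPos m pos) :
    IsPos (m+1) (xpos m pos) := by
  obtain ⟨hbnd, hsurj, hinj⟩ := hP
  refine ⟨?_, ?_, ?_⟩
  · intro j
    constructor
    · intro hj
      have h1 := (hbnd j).1
      simp only [xpos]; split_ifs <;> omega
    · intro hj; simp only [xpos]; split_ifs <;> omega
  · intro u hu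
    rcases eq_or_ne u m with heq | hne
    · exact ⟨m, by omega, by simp only [xpos]; split_ifs <;> omega⟩
    · obtain ⟨j, hj, hpj⟩ := hsurj u (by omega)
      exact ⟨j, by omega, by simp only [xpos]; split_ifs <;> omega⟩
  · intro j j' hj hj' h
    have h1 := (hbnd j).1
    have h2 := (hbnd j').1
    simp only [xpos] at h
    split_ifs at h <;> first | omega | (exact hinj j j' (by omega) (by omega) h)

lemma xpos_top (m : ℕ) (b : ℕ → ℤ) (pos : ℕ → ℕ)
    (hbnd : ∀ j, j < m → pos j < m) :
    vtx (m+1) b (xpos m pos) (m+1) = fun j =>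
      vtx (m+1) b (xpos m pos) m j + (if j = m+1 then 1 else 0) - (if j = m then 1 else 0) := by
  funext j
  have h1 := hbnd (j-1)
  have h2 := hbnd j
  have A : (if 1 ≤ j ∧ j ≤ m+1 ∧ xpos m pos (j-1) < m+1 then (1:ℤ) else 0)
      = (if 1 ≤ j ∧ j ≤ m+1 ∧ xpos m pos (j-1) < m then 1 else 0)
        + (if j = m+1 then 1 else 0) := by
    simp only [xpos]; split_ifs <;> omega
  have B : (if j < m+1 ∧ xpos m pos j < m+1 then (1:ℤ) else 0)
      = (if j < m+1 ∧ xpos m pos j < m then 1 else 0) + (if j = m then 1 else 0) := by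
    simp only [xpos]; split_ifs <;> omega
  simp only [vtx]; rw [A, B]; ring

lemma xpos_mono (m : ℕ) (b : ℕ → ℤ) (pos : ℕ → ℕ)
    (s : ℕ) (hs : s ≤ m) :
    vtx (m+1) b (xpos m pos) s m ≤ vtx (m+1) b (xpos m pos) m m := by
  have hx : xpos m pos m = m := by simp only [xpos]; split_ifs <;> omega
  simp only [vtx]; split_ifs <;> omega

open scoped Classical

noncomputable def fullsum (m : ℕ) (k : ℤ) (lab : (ℕ → ℤ) → ℕ) : ZMod 2 :=
  ∑ c ∈ cells m k, if IsFull m lab c then 1 else 0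

lemma door_card' (m : ℕ) (lab : (ℕ → ℤ) → ℕ) (c : Cell)
    (hg : ∀ t, t ≤ m → labf m lab c t ≤ m) :
    (((range (m+1)).filter (fun t => IsDoor m lab c t)).card : ZMod 2)
      = if IsFull m lab c then 1 else 0 := by
  have h := door_card m (labf m lab c) hg
  simp only [IsDoor, IsFull]
  convert h using 3
  apply Finset.filter_congr_decidable
  split_ifs with hP
  · exact if_pos hP
  · exact if_neg hP

lemma base_case (k : ℤ) (hk : 1 ≤ k) (lab : (ℕ → ℤ) → ℕ)
    (hlab : ∀ x, IsPt 0 k x → lab x ≤ 0 ∧ 1 ≤ x (lab x)) :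
    fullsum 0 k lab = 1 := by
  set b₀ : ℕ → ℤ := fun j => if j = 0 then k else 0 with hb₀
  set p₀ : ℕ → ℕ := fun _ => 0 with hp₀
  have hb₀pt : IsPt 0 k b₀ := by
    refine ⟨fun j => ?_, fun j hj => ?_, ?_⟩
    · simp only [hb₀]; split_ifs <;> omega
    · simp only [hb₀]; split_ifs <;> omega
    · simp [hb₀]
  have hvtx : ∀ pos t, vtx 0 b₀ pos t = b₀ := by
    intro pos t; funext j; simp only [vtx]
    split_ifs <;> omega
  have hcell : IsCell 0 k (b₀, p₀) := by
    refine ⟨⟨fun j => ⟨fun h => absurd h (by omega), fun _ => rfl⟩,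
      fun t ht => absurd ht (by omega),
      fun j j' hj _ _ => absurd hj (by omega)⟩, fun t _ => ?_⟩
    show IsPt 0 k (vtx 0 b₀ p₀ t)
    rw [hvtx]; exact hb₀pt
  have hcells : cells 0 k = {(b₀, p₀)} := by
    ext c
    rw [mem_cells, Finset.mem_singleton]
    constructor
    · intro hc
      have hbpt : IsPt 0 k c.1 := by
        have := hc.2 0 (by omega); rwa [vtx_zero] at this
      have h1 : c.1 = b₀ := by
        funext j
        rcases Nat.eq_zero_or_pos j with rfl | hj
        · have hsum := hbpt.2.2
          rw [show (0:ℕ)+1 = 1 from rfl, Finset.sum_range_one] at hsum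
          simp [hb₀, hsum]
        · rw [hbpt.2.1 j (by omega)]; simp only [hb₀]; split_ifs <;> omega
      have h2 : c.2 = p₀ := funext fun j => (hc.1.1 j).2 (by omega)
      rw [← h1, ← h2]
    · intro h; rw [h]; exact hcell
  have hfull : IsFull 0 lab (b₀, p₀) := by
    intro i hi
    refine ⟨0, le_rfl, ?_⟩
    show lab (vtx 0 b₀ p₀ 0) = i
    rw [hvtx]
    have := (hlab b₀ hb₀pt).1
    omega
  rw [fullsum, hcells, Finset.sum_singleton, if_pos hfull]

theorem sperner_parity : ∀ (m : ℕ) (k : ℤ), 1 ≤ k → ∀ (lab : (ℕ → ℤ) → ℕ),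
    (∀ x, IsPt m k x → lab x ≤ m ∧ 1 ≤ x (lab x)) → fullsum m k lab = 1 := by
  intro m
  induction m with
  | zero => exact fun k hk lab hlab => base_case k hk lab hlab
  | succ m IH =>
    intro k hk lab hlab
    have hlab' : ∀ x, IsPt m k x → lab x ≤ m ∧ 1 ≤ x (lab x) := by
      intro x hx
      obtain ⟨hle, hge⟩ := hlab x (IsPt_up hx)
      have hxm : x (m+1) = 0 := hx.2.1 (m+1) (by omega)
      refine ⟨?_, hge⟩
      by_contra hcon
      have : lab x = m+1 := by omega
      rw [this, hxm] at hge; omega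
    set D : Finset (Cell × ℕ) :=
      (cells (m+1) k ×ˢ range (m+2)).filter (fun p => IsDoor (m+1) lab p.1 p.2) with hD
    have memD : ∀ p : Cell × ℕ, p ∈ D ↔
        (IsCell (m+1) k p.1 ∧ IsDoor (m+1) lab p.1 p.2) := by
      intro p
      rw [hD, Finset.mem_filter, Finset.mem_product, mem_cells, Finset.mem_range]
      constructor
      · rintro ⟨⟨h1, _⟩, h3⟩; exact ⟨h1, h3⟩
      · rintro ⟨h1, h3⟩; exact ⟨⟨h1, by have := h3.1; omega⟩, h3⟩
    have step2 : fullsum (m+1) k lab = ∑ _p ∈ D, (1 : ZMod 2) := by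
      rw [fullsum, hD, Finset.sum_filter, Finset.sum_product]
      refine Finset.sum_congr rfl (fun c hc => ?_)
      rw [← door_card' (m+1) lab c (fun t ht => (hlab _ ((mem_cells.mp hc).2 t ht)).1),
          Finset.sum_boole]
    have step3 : ∑ _p ∈ D, (1 : ZMod 2)
        = (∑ _p ∈ D.filter (fun p => Bd (m+1) p.1 p.2), (1 : ZMod 2))
          + ∑ _p ∈ D.filter (fun p => ¬ Bd (m+1) p.1 p.2), (1 : ZMod 2) :=
      (Finset.sum_filter_add_sum_filter_not D _ _).symm
    have PG : ∀ p : Cell × ℕ, IsCell (m+1) k p.1 → IsDoor (m+1) lab p.1 p.2 →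
        ¬ Bd (m+1) p.1 p.2 →
        IsCell (m+1) k (pivot (m+1) p.1 p.2).1 ∧
        IsDoor (m+1) lab (pivot (m+1) p.1 p.2).1 (pivot (m+1) p.1 p.2).2 ∧
        ¬ Bd (m+1) (pivot (m+1) p.1 p.2).1 (pivot (m+1) p.1 p.2).2 ∧
        pivot (m+1) (pivot (m+1) p.1 p.2).1 (pivot (m+1) p.1 p.2).2 = p ∧
        pivot (m+1) p.1 p.2 ≠ p := by
      rintro ⟨⟨b, pos⟩, t⟩ hc hd hbd
      exact pivot_good (m+1) k lab (by omega) hlab b pos t hc hd hbd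
    have step4 : ∑ _p ∈ D.filter (fun p => ¬ Bd (m+1) p.1 p.2), (1 : ZMod 2) = 0 := by
      set S := D.filter (fun p => ¬ Bd (m+1) p.1 p.2) with hS
      have memS : ∀ p : Cell × ℕ, p ∈ S ↔
          (IsCell (m+1) k p.1 ∧ IsDoor (m+1) lab p.1 p.2 ∧ ¬ Bd (m+1) p.1 p.2) := by
        intro p
        rw [hS, Finset.mem_filter, memD]
        tauto
      refine Finset.sum_involution (fun p _ => pivot (m+1) p.1 p.2) ?_ ?_ ?_ ?_
      · intro a _; decide
      · intro a ha _
        obtain ⟨h1, h2, h3⟩ := (memS a).mp ha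
        exact (PG a h1 h2 h3).2.2.2.2
      · intro a ha
        obtain ⟨h1, h2, h3⟩ := (memS a).mp ha
        obtain ⟨g1, g2, g3, _, _⟩ := PG a h1 h2 h3
        exact (memS _).mpr ⟨g1, g2, g3⟩
      · intro a ha
        obtain ⟨h1, h2, h3⟩ := (memS a).mp ha
        exact (PG a h1 h2 h3).2.2.2.1
    have step5 : ∑ _p ∈ D.filter (fun p => Bd (m+1) p.1 p.2), (1 : ZMod 2)
        = fullsum m k lab := by
      have hcard : (D.filter (fun p => Bd (m+1) p.1 p.2)).card
          = ((cells m k).filter (fun c => IsFull m lab c)).card := by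
        refine Finset.card_bij (fun p _ => ((p.1.1, tpos m p.1.2) : Cell)) ?_ ?_ ?_
        · -- membership
          rintro p hp
          rw [Finset.mem_filter] at hp
          obtain ⟨hpD, ht, hpm, hbm⟩ := hp
          obtain ⟨hcell, hdoor⟩ := (memD p).mp hpD
          have hpm' : p.1.2 m = m := by
            have : m + 1 - 1 = m := by omega
            rwa [this] at hpm
          have hbm' : p.1.1 (m+1) = 0 := hbm
          have hagree : ∀ j, j < m → p.1.2 j = tpos m p.1.2 j := by
            intro j hj; simp only [tpos]; split_ifs <;> omega
          have hveq : ∀ s, s ≤ m → vtx m p.1.1 (tpos m p.1.2) s = vtx (m+1) p.1.1 p.1.2 s :=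
            fun s hs => (vtx_dim_eq m p.1.1 p.1.2 (tpos m p.1.2) hagree hpm' s hs).symm
          rw [Finset.mem_filter, mem_cells]
          refine ⟨⟨tpos_isPos m p.1.2 hcell.1 hpm', fun s hs => ?_⟩, ?_⟩
          · show IsPt m k (vtx m p.1.1 (tpos m p.1.2) s)
            rw [hveq s hs]
            exact IsPt_down (hcell.2 s (by omega)) (vtx_face m p.1.1 p.1.2 hpm' hbm' s hs)
          · intro i hi
            obtain ⟨s, hsM, hsne, hls⟩ := hdoor.2 i (by omega)
            have hsm : s ≤ m := by omega
            refine ⟨s, hsm, ?_⟩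
            show lab (vtx m p.1.1 (tpos m p.1.2) s) = i
            rw [hveq s hsm]
            exact hls
        · -- injectivity
          intro p hp q hq heq
          rw [Finset.mem_filter] at hp hq
          obtain ⟨hpD, htp, hpmp, hbmp⟩ := hp
          obtain ⟨hqD, htq, hpmq, hbmq⟩ := hq
          obtain ⟨hcellp, _⟩ := (memD p).mp hpD
          obtain ⟨hcellq, _⟩ := (memD q).mp hqD
          rw [Prod.mk.injEq] at heq
          obtain ⟨hb, hpos⟩ := heq
          have hm1 : m + 1 - 1 = m := by omega
          rw [hm1] at hpmp hpmq
          have hposeq : p.1.2 = q.1.2 := by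
            funext j
            rcases Nat.lt_or_ge j m with hj | hj
            · have := congrFun hpos j
              simp only [tpos] at this
              split_ifs at this <;> omega
            · rcases eq_or_ne j m with rfl | hjm
              · rw [hpmp, hpmq]
              · rw [(hcellp.1.1 j).2 (by omega), (hcellq.1.1 j).2 (by omega)]
          have : p.1 = q.1 := Prod.ext hb hposeq
          exact Prod.ext this (by rw [htp, htq])
        · -- surjectivity
          intro c' hc'
          rw [Finset.mem_filter, mem_cells] at hc'
          obtain ⟨hcell', hfull'⟩ := hc'
          have hbpt' : IsPt m k c'.1 := by
            have := hcell'.2 0 (by omega); rwa [vtx_zero] at this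
          have hxm : xpos m c'.2 m = m := by simp only [xpos]; split_ifs <;> omega
          have hagree : ∀ j, j < m → xpos m c'.2 j = c'.2 j := by
            intro j hj; simp only [xpos]; split_ifs <;> omega
          have hveq : ∀ s, s ≤ m → vtx (m+1) c'.1 (xpos m c'.2) s = vtx m c'.1 c'.2 s :=
            fun s hs => vtx_dim_eq m c'.1 (xpos m c'.2) c'.2 hagree hxm s hs
          have hb1 : ∀ j, j < m → c'.2 j < m := fun j h => (hcell'.1.1 j).1 h
          have hcellx : IsCell (m+1) k (c'.1, xpos m c'.2) := by
            refine ⟨xpos_isPos m c'.2 hcell'.1, fun s hs => ?_⟩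
            show IsPt (m+1) k (vtx (m+1) c'.1 (xpos m c'.2) s)
            rcases Nat.lt_or_ge s (m+1) with hsm | hsm
            · rw [hveq s (by omega)]
              exact IsPt_up (hcell'.2 s (by omega))
            · have hseq : s = m+1 := by omega
              rw [hseq, xpos_top m c'.1 c'.2 hb1]
              have hvm : IsPt (m+1) k (vtx (m+1) c'.1 (xpos m c'.2) m) := by
                rw [hveq m le_rfl]; exact IsPt_up (hcell'.2 m le_rfl)
              refine IsPt.shift hvm (by omega) ?_
              obtain ⟨s₀, hs₀, hls₀⟩ := hfull' m le_rfl
              have hx := (hlab (vtx m c'.1 c'.2 s₀) (IsPt_up (hcell'.2 s₀ hs₀))).2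
              rw [show lab (vtx m c'.1 c'.2 s₀) = m from hls₀] at hx
              have h1 : 1 ≤ vtx (m+1) c'.1 (xpos m c'.2) s₀ m := by
                rw [hveq s₀ hs₀]; exact hx
              have h2 := xpos_mono m c'.1 c'.2 s₀ hs₀
              omega
          have hdoorx : IsDoor (m+1) lab (c'.1, xpos m c'.2) (m+1) := by
            refine ⟨le_rfl, fun i hi => ?_⟩
            obtain ⟨s₀, hs₀, hls₀⟩ := hfull' i (by omega)
            refine ⟨s₀, by omega, by omega, ?_⟩
            show lab (vtx (m+1) c'.1 (xpos m c'.2) s₀) = i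
            rw [hveq s₀ hs₀]
            exact hls₀
          refine ⟨((c'.1, xpos m c'.2), m+1), ?_, ?_⟩
          · rw [Finset.mem_filter]
            refine ⟨(memD _).mpr ⟨hcellx, hdoorx⟩, rfl, ?_, ?_⟩
            · show xpos m c'.2 (m+1-1) = m+1-1
              rw [show m+1-1 = m from by omega]; exact hxm
            · exact hbpt'.2.1 (m+1) (by omega)
          · show ((c'.1, tpos m (xpos m c'.2)) : Cell) = c'
            have : tpos m (xpos m c'.2) = c'.2 := by
              funext j
              have hj0 := (hcell'.1.1 j).2
              simp only [tpos, xpos]; split_ifs <;> omega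
            rw [this]
      rw [Finset.sum_const, nsmul_eq_mul, mul_one, hcard, fullsum, Finset.sum_boole]
    rw [step2, step3, step4, step5, add_zero]
    exact IH k hk lab hlab'

theorem sperner_exists (m : ℕ) (k : ℤ) (hk : 1 ≤ k) (lab : (ℕ → ℤ) → ℕ)
    (hlab : ∀ x, IsPt m k x → lab x ≤ m ∧ 1 ≤ x (lab x)) :
    ∃ c, IsCell m k c ∧ IsFull m lab c := by
  by_contra h
  push_neg at h
  have h0 : fullsum m k lab = 0 := by
    rw [fullsum]
    apply Finset.sum_eq_zero
    intro c hc
    rw [if_neg (h c (mem_cells.mp hc))]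
  rw [sperner_parity m k hk lab hlab] at h0
  exact one_ne_zero h0

lemma vtx_close (m : ℕ) (b : ℕ → ℤ) (pos : ℕ → ℕ) (t j : ℕ) :
    b j - 1 ≤ vtx m b pos t j ∧ vtx m b pos t j ≤ b j + 1 := by
  simp only [vtx]; split_ifs <;> omega

end GND

/-- The standard price simplex in `ℝⁿ`: vectors with nonnegative coordinates summing to 1. -/
def priceSimplex (n : ℕ) : Set (Fin n → ℝ) :=
  {p | (∀ i, 0 ≤ p i) ∧ ∑ i, p i = 1}

/-- **Gale–Nikaido–Debreu existence theorem.**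
If `f` is a continuous excess demand function on the standard price simplex
satisfying Walras's law `⟨p, f p⟩ = 0`, then there exists an equilibrium price
`p* ∈ Δ` with `f i (p*) ≤ 0` for every coordinate `i`. -/
theorem exists_equilibrium_price (n : ℕ) (hn : 1 ≤ n)
    (f : (Fin n → ℝ) → (Fin n → ℝ))
    (hf : ContinuousOn f (priceSimplex n))
    (walras : ∀ p ∈ priceSimplex n, ∑ i, p i * f p i = 0) :
    ∃ p ∈ priceSimplex n, ∀ i, f p i ≤ 0 := by
  classical
  set m := n - 1 with hmdef
  have hmn : m + 1 = n := by omega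
  set toP : ℕ → (ℕ → ℤ) → (Fin n → ℝ) :=
    fun K x i => ((x (i:ℕ) : ℝ)) / ((K:ℝ)+1) with htoP
  have hsimplex : ∀ (K : ℕ) (x : ℕ → ℤ), GND.IsPt m ((K:ℤ)+1) x →
      toP K x ∈ priceSimplex n := by
    intro K x hpt
    obtain ⟨h0, hs, hk⟩ := hpt
    constructor
    · intro i
      apply div_nonneg
      · exact_mod_cast h0 i
      · positivity
    · have hsum : ∑ i : Fin n, (x (i:ℕ) : ℝ) = (K:ℝ)+1 := by
        have h1 : ∑ j ∈ Finset.range n, x j = (K:ℤ)+1 := by rw [← hmn]; exact hk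
        have h2 : ∑ i : Fin n, x (i:ℕ) = (K:ℤ)+1 := by
          rw [← h1, ← Finset.sum_range fun j => x j]
        calc ∑ i : Fin n, (x (i:ℕ) : ℝ) = ((∑ i : Fin n, x (i:ℕ) : ℤ) : ℝ) := by push_cast; rfl
        _ = (K:ℝ)+1 := by rw [h2]; push_cast; ring
      simp only [htoP]
      rw [← Finset.sum_div, hsum, div_self (by positivity)]
  have hgood : ∀ (K : ℕ) (x : ℕ → ℤ), GND.IsPt m ((K:ℤ)+1) x →
      ∃ i : Fin n, 1 ≤ x (i:ℕ) ∧ f (toP K x) i ≤ 0 := by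
    intro K x hpt
    by_contra hcon
    push_neg at hcon
    have hmem := hsimplex K x hpt
    have hw := walras _ hmem
    have hex : ∃ i : Fin n, 1 ≤ x (i:ℕ) := by
      by_contra hx
      push_neg at hx
      have hz : ∑ j ∈ Finset.range (m+1), x j = 0 := by
        apply Finset.sum_eq_zero
        intro j hj
        rw [Finset.mem_range] at hj
        have h1 := hpt.1 j
        have h2 : ¬ 1 ≤ x j := by simpa using hx ⟨j, by omega⟩
        omega
      have := hpt.2.2
      omega
    obtain ⟨i₀, hi₀⟩ := hex
    have hpos : 0 < ∑ i, toP K x i * f (toP K x) i := by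
      apply Finset.sum_pos'
      · intro i _
        rcases le_or_gt 1 (x (i:ℕ)) with h | h
        · have hf1 := hcon i h
          have hp1 : 0 < toP K x i := by
            simp only [htoP]
            apply div_pos
            · exact_mod_cast h
            · positivity
          positivity
        · have hz : x (i:ℕ) = 0 := by have := hpt.1 (i:ℕ); omega
          simp [htoP, hz]
      · refine ⟨i₀, Finset.mem_univ _, ?_⟩
        have hf1 := hcon i₀ hi₀
        have hp1 : 0 < toP K x i₀ := by
          simp only [htoP]
          apply div_pos
          · exact_mod_cast hi₀
          · positivity
        positivity
    exact hpos.ne' hw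
  set lab : ℕ → (ℕ → ℤ) → ℕ := fun K x =>
    if h : ∃ i : Fin n, 1 ≤ x (i:ℕ) ∧ f (toP K x) i ≤ 0 then ((h.choose : Fin n) : ℕ) else 0
    with hlabdef
  have hlabspec : ∀ (K : ℕ) (x : ℕ → ℤ), GND.IsPt m ((K:ℤ)+1) x →
      ∃ i : Fin n, (i:ℕ) = lab K x ∧ 1 ≤ x (i:ℕ) ∧ f (toP K x) i ≤ 0 := by
    intro K x hpt
    have h := hgood K x hpt
    refine ⟨h.choose, ?_, h.choose_spec.1, h.choose_spec.2⟩
    simp only [hlabdef]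
    rw [dif_pos h]
  have hlabSper : ∀ (K : ℕ) (x : ℕ → ℤ), GND.IsPt m ((K:ℤ)+1) x →
      lab K x ≤ m ∧ 1 ≤ x (lab K x) := by
    intro K x hpt
    obtain ⟨i, hi, hx, _⟩ := hlabspec K x hpt
    have : (i:ℕ) < n := i.isLt
    constructor
    · omega
    · rw [← hi]; exact hx
  have main : ∀ K : ℕ, ∃ (b : ℕ → ℤ) (y : Fin n → (ℕ → ℤ)),
      GND.IsPt m ((K:ℤ)+1) b ∧
      (∀ i : Fin n, GND.IsPt m ((K:ℤ)+1) (y i)) ∧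
      (∀ (i : Fin n) (j : ℕ), b j - 1 ≤ y i j ∧ y i j ≤ b j + 1) ∧
      (∀ i : Fin n, f (toP K (y i)) i ≤ 0) := by
    intro K
    obtain ⟨c, hcell, hfull⟩ := GND.sperner_exists m ((K:ℤ)+1) (by omega) (lab K)
      (hlabSper K)
    have hbpt : GND.IsPt m ((K:ℤ)+1) c.1 := by
      have := hcell.2 0 (by omega); rwa [GND.vtx_zero] at this
    have ht : ∀ i : Fin n, ∃ t, t ≤ m ∧ GND.labf m (lab K) c t = (i:ℕ) := by
      intro i
      exact hfull (i:ℕ) (by have := i.isLt; omega)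
    choose t htm hlabt using ht
    refine ⟨c.1, fun i => GND.vtx m c.1 c.2 (t i), hbpt, ?_, ?_, ?_⟩
    · intro i; exact hcell.2 (t i) (htm i)
    · intro i j; exact GND.vtx_close m c.1 c.2 (t i) j
    · intro i
      have hpt := hcell.2 (t i) (htm i)
      obtain ⟨i', hi', hx', hf'⟩ := hlabspec K _ hpt
      have : i' = i := by
        apply Fin.ext
        rw [hi']
        exact hlabt i
      rwa [this] at hf'
  choose b y hb hy hclose hneg using main
  set q : ℕ → (Fin n → ℝ) := fun K => toP K (b K) with hq
  have hqmem : ∀ K, q K ∈ priceSimplex n := fun K => hsimplex K (b K) (hb K)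
  have hcompact : IsCompact (priceSimplex n) := by
    have : priceSimplex n = stdSimplex ℝ (Fin n) := rfl
    rw [this]
    exact isCompact_stdSimplex _ _
  obtain ⟨pstar, hpmem, φ, hφmono, hφtend⟩ := hcompact.tendsto_subseq hqmem
  refine ⟨pstar, hpmem, fun i => ?_⟩
  set r : ℕ → (Fin n → ℝ) := fun K => toP K (y K i) with hr
  have hrmem : ∀ K, r K ∈ priceSimplex n := fun K => hsimplex K _ (hy K i)
  have hinv0 : Filter.Tendsto (fun K : ℕ => 1 / ((φ K : ℝ) + 1)) Filter.atTop (nhds 0) := by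
    apply Filter.Tendsto.comp tendsto_one_div_add_atTop_nhds_zero_nat
      (StrictMono.tendsto_atTop hφmono)
  have hrtend : Filter.Tendsto (r ∘ φ) Filter.atTop (nhds pstar) := by
    rw [tendsto_pi_nhds]
    intro j
    have hqj : Filter.Tendsto (fun K => q (φ K) j) Filter.atTop (nhds (pstar j)) := by
      have h := hφtend
      rw [tendsto_pi_nhds] at h
      exact h j
    have hlow : ∀ K, q (φ K) j - 1 / ((φ K : ℝ) + 1) ≤ (r ∘ φ) K j := by
      intro K
      have h1 : ((b (φ K) j : ℝ) - 1) / ((φ K : ℝ) + 1)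
          ≤ ((y (φ K) i j : ℝ)) / ((φ K : ℝ) + 1) := by
        apply (div_le_div_iff_of_pos_right (by positivity)).mpr
        have := (hclose (φ K) i j).1
        push_cast
        exact_mod_cast this
      rw [sub_div] at h1
      simpa [hq, hr, htoP] using h1
    have hup : ∀ K, (r ∘ φ) K j ≤ q (φ K) j + 1 / ((φ K : ℝ) + 1) := by
      intro K
      have h1 : ((y (φ K) i j : ℝ)) / ((φ K : ℝ) + 1)
          ≤ ((b (φ K) j : ℝ) + 1) / ((φ K : ℝ) + 1) := by
        apply (div_le_div_iff_of_pos_right (by positivity)).mpr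
        have := (hclose (φ K) i j).2
        push_cast
        exact_mod_cast this
      rw [add_div] at h1
      simpa [hq, hr, htoP] using h1
    have hltend : Filter.Tendsto (fun K => q (φ K) j - 1 / ((φ K : ℝ) + 1))
        Filter.atTop (nhds (pstar j)) := by
      have := hqj.sub hinv0
      simpa using this
    have hutend : Filter.Tendsto (fun K => q (φ K) j + 1 / ((φ K : ℝ) + 1))
        Filter.atTop (nhds (pstar j)) := by
      have := hqj.add hinv0
      simpa using this
    exact tendsto_of_tendsto_of_tendsto_of_le_of_le hltend hutend hlow hup
  have hftend : Filter.Tendsto (fun K => f ((r ∘ φ) K) i) Filter.atTop (nhds (f pstar i)) := by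
    have h1 : Filter.Tendsto (r ∘ φ) Filter.atTop (nhdsWithin pstar (priceSimplex n)) :=
      tendsto_nhdsWithin_of_tendsto_nhds_of_eventually_within _ hrtend
        (Filter.Eventually.of_forall (fun K => hrmem (φ K)))
    have h2 : Filter.Tendsto (fun K => f ((r ∘ φ) K)) Filter.atTop (nhds (f pstar)) :=
      Filter.Tendsto.comp (hf pstar hpmem) h1
    exact (((continuous_apply i).tendsto (f pstar)).comp h2)
  exact le_of_tendsto hftend (Filter.Eventually.of_forall (fun K => hneg (φ K) i))
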